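/- Let K and L be regular languages (given by DFAs with m and n states respectively, say). If there exist towers of prefixes of arbitrary height between K and L, then there exists an infinite tower of prefixes between K and L. Moreover, any finite tower of prefixes has height at most the number of states of the product automaton of the minimal DFAs. -/
import Mathlib


/-- A finite tower of prefixes of height `r` between `K` and `L`. -/
def PrefTower {α : Type*} (K L : Set (List α)) (r : ℕ) (w : ℕ → List α) : Prop :=
  (0 < r → w 0 ∈ K ∪ L) ∧
    ∀ i, i + 1 < r →
      w i <+: w (i + 1) ∧
        (w i ∈ K → w (i + 1) ∈ L) ∧ (w i ∈ L → w (i + 1) ∈ K)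

/-- An infinite tower of prefixes between `K` and `L`. -/
def InfPrefTower {α : Type*} (K L : Set (List α)) (w : ℕ → List α) : Prop :=
  w 0 ∈ K ∪ L ∧
    ∀ i, w i <+: w (i + 1) ∧
      (w i ∈ K → w (i + 1) ∈ L) ∧ (w i ∈ L → w (i + 1) ∈ K)

/-- The set of left quotients of a language; its cardinality is the number of
states of the minimal DFA of the language. -/
def leftQuotients {α : Type*} (K : Set (List α)) : Set (Set (List α)) :=
  {S | ∃ x : List α, S = {y | x ++ y ∈ K}}

namespace PrefTowerAux

/-- `c` repeated `q` times. -/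
def cyc {α : Type*} (c : List α) : ℕ → List α
  | 0 => []
  | q + 1 => cyc c q ++ c

variable {α : Type*} {K L : Set (List α)} {r : ℕ} {w : ℕ → List α}

lemma mem_union_of_tower (hw : PrefTower K L r w) : ∀ t, t < r → w t ∈ K ∪ L := by
  intro t
  induction t with
  | zero => intro h; exact hw.1 h
  | succ n ih =>
    intro h
    rcases ih (by omega) with hKm | hLm
    · exact Or.inr ((hw.2 n h).2.1 hKm)
    · exact Or.inl ((hw.2 n h).2.2 hLm)

lemma prefix_of_tower (hw : PrefTower K L r w) :
    ∀ i k, i + k < r → w i <+: w (i + k) := by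
  intro i k
  induction k with
  | zero => intro _; exact List.prefix_refl _
  | succ n ih =>
    intro h
    have h1 : i + n < r := by omega
    have h2 := (hw.2 (i + n) (by omega)).1
    exact (ih h1).trans h2

lemma exists_inf (hw : PrefTower K L r w) {i j : ℕ} (hij : i < j) (hjr : j < r)
    (hQK : ∀ s, w i ++ s ∈ K ↔ w j ++ s ∈ K)
    (hQL : ∀ s, w i ++ s ∈ L ↔ w j ++ s ∈ L) :
    ∃ v : ℕ → List α, InfPrefTower K L v := by
  set p := j - i with hp
  have hp0 : 0 < p := by omega
  set d : ℕ → List α := fun k => (w (i + k)).drop (w i).length with hd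
  have hdk : ∀ k, k ≤ p → w i ++ d k = w (i + k) := by
    intro k hk
    have hpre : w i <+: w (i + k) := prefix_of_tower hw i k (by omega)
    exact List.prefix_iff_eq_append.mp hpre
  set c : List α := d p with hc
  have hwj : w i ++ c = w j := by
    have := hdk p le_rfl
    rwa [show i + p = j by omega] at this
  have memK : ∀ q s, (w i ++ (cyc c q ++ s) ∈ K ↔ w i ++ s ∈ K) := by
    intro q
    induction q with
    | zero => intro s; simp [cyc]
    | succ n ih =>
      intro s
      have e : cyc c (n + 1) ++ s = cyc c n ++ (c ++ s) := by simp [cyc]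
      rw [e, ih (c ++ s), ← List.append_assoc, hwj]
      exact (hQK s).symm
  have memL : ∀ q s, (w i ++ (cyc c q ++ s) ∈ L ↔ w i ++ s ∈ L) := by
    intro q
    induction q with
    | zero => intro s; simp [cyc]
    | succ n ih =>
      intro s
      have e : cyc c (n + 1) ++ s = cyc c n ++ (c ++ s) := by simp [cyc]
      rw [e, ih (c ++ s), ← List.append_assoc, hwj]
      exact (hQL s).symm
  set g : ℕ → List α := fun m => w i ++ (cyc c (m / p) ++ d (m % p + 1)) with hg
  have hgK : ∀ m, (g m ∈ K ↔ w (i + (m % p + 1)) ∈ K) := by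
    intro m
    have hk : m % p + 1 ≤ p := Nat.mod_lt m hp0
    rw [hg]
    simp only
    rw [memK, hdk _ hk]
  have hgL : ∀ m, (g m ∈ L ↔ w (i + (m % p + 1)) ∈ L) := by
    intro m
    have hk : m % p + 1 ≤ p := Nat.mod_lt m hp0
    rw [hg]
    simp only
    rw [memL, hdk _ hk]
  -- the step structure of g
  have gstep : ∀ m, g m <+: g (m + 1) ∧ (g m ∈ K → g (m + 1) ∈ L) ∧
      (g m ∈ L → g (m + 1) ∈ K) := by
    intro m
    have hkp : m % p < p := Nat.mod_lt m hp0
    have hdm := Nat.div_add_mod m p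
    by_cases hcase : m % p + 1 < p
    · -- no wrap
      have heq : m + 1 = p * (m / p) + (m % p + 1) := by omega
      have hmod : (m + 1) % p = m % p + 1 := by
        rw [heq, Nat.mul_add_mod, Nat.mod_eq_of_lt hcase]
      have hdiv : (m + 1) / p = m / p := by
        rw [heq, Nat.mul_add_div hp0, Nat.div_eq_of_lt hcase, Nat.add_zero]
      have hstep := hw.2 (i + (m % p + 1)) (by omega)
      have hpre : d (m % p + 1) <+: d (m % p + 2) := by
        rw [← List.prefix_append_right_inj (w i), hdk _ (by omega), hdk _ (by omega)]
        have h5 : i + (m % p + 1) + 1 = i + (m % p + 2) := by omega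
        rw [← h5]
        exact hstep.1
      refine ⟨?_, ?_, ?_⟩
      · rw [hg]
        simp only [hdiv, hmod]
        rw [← List.append_assoc, ← List.append_assoc, List.prefix_append_right_inj]
        simpa using hpre
      · intro hm1
        rw [hgK] at hm1
        rw [hgL, hmod]
        have := hstep.2.1 hm1
        rwa [show i + (m % p + 1) + 1 = i + (m % p + 1 + 1) by omega] at this
      · intro hm1
        rw [hgL] at hm1
        rw [hgK, hmod]
        have := hstep.2.2 hm1
        rwa [show i + (m % p + 1) + 1 = i + (m % p + 1 + 1) by omega] at this
    · -- wrap around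
      have hkp1 : m % p + 1 = p := by omega
      have hmeq : m + 1 = p * (m / p + 1) := by rw [Nat.mul_succ]; omega
      have hmod : (m + 1) % p = 0 := by rw [hmeq, Nat.mul_mod_right]
      have hdiv : (m + 1) / p = m / p + 1 := by
        rw [hmeq, Nat.mul_div_cancel_left _ hp0]
      have hgm : g m = w i ++ cyc c (m / p + 1) := by
        rw [hg]
        simp only [hkp1, ← hc]
        rw [show cyc c (m / p + 1) = cyc c (m / p) ++ c from rfl]
      have hgm1 : g (m + 1) = (w i ++ cyc c (m / p + 1)) ++ d 1 := by
        rw [hg]; simp only [hdiv, hmod, List.append_assoc]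
      have hstep := hw.2 i (by omega)
      have hgmK : g m ∈ K ↔ w i ∈ K := by
        rw [hgm, show w i ++ cyc c (m / p + 1) = w i ++ (cyc c (m / p + 1) ++ []) by simp,
          memK]
        simp
      have hgmL : g m ∈ L ↔ w i ∈ L := by
        rw [hgm, show w i ++ cyc c (m / p + 1) = w i ++ (cyc c (m / p + 1) ++ []) by simp,
          memL]
        simp
      have hgm1K : g (m + 1) ∈ K ↔ w (i + 1) ∈ K := by
        rw [hgK, hmod]
      have hgm1L : g (m + 1) ∈ L ↔ w (i + 1) ∈ L := by
        rw [hgL, hmod]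
      refine ⟨?_, ?_, ?_⟩
      · rw [hgm, hgm1]; exact ⟨d 1, rfl⟩
      · intro hm1
        exact hgm1L.mpr (hstep.2.1 (hgmK.mp hm1))
      · intro hm1
        exact hgm1K.mpr (hstep.2.2 (hgmL.mp hm1))
  -- the infinite tower
  set v : ℕ → List α := fun t => if t ≤ i then w t else g (t - i - 1) with hv
  have hvle : ∀ t, t ≤ i → v t = w t := by
    intro t ht; rw [hv]; simp [ht]
  have hvgt : ∀ m, v (i + m + 1) = g m := by
    intro m
    rw [hv]
    simp only [if_neg (by omega : ¬ i + m + 1 ≤ i)]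
    congr 1
    omega
  have hg0 : g 0 = w (i + 1) := by
    rw [hg]
    simp only [Nat.zero_div, Nat.zero_mod, cyc]
    rw [List.nil_append, hdk 1 (by omega)]
  refine ⟨v, ?_, ?_⟩
  · rw [hvle 0 (by omega)]
    exact mem_union_of_tower hw 0 (by omega)
  · intro t
    rcases lt_trichotomy t i with ht | ht | ht
    · rw [hvle t (by omega), hvle (t + 1) (by omega)]
      exact hw.2 t (by omega)
    · subst ht
      rw [hvle t le_rfl, show t + 1 = t + 0 + 1 by omega, hvgt 0, hg0]
      exact hw.2 t (by omega)
    · have h1 : t = i + (t - i - 1) + 1 := by omega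
      have h2 : t + 1 = i + (t - i) + 1 := by omega
      have h3 : t - i = (t - i - 1) + 1 := by omega
      rw [h1, hvgt, ← h1, h2, hvgt, h3]
      exact gstep (t - i - 1)

lemma tower_mono {r' : ℕ} (h : r' ≤ r) (hw : PrefTower K L r w) : PrefTower K L r' w :=
  ⟨fun h0 => hw.1 (lt_of_lt_of_le h0 h), fun t ht => hw.2 t (lt_of_lt_of_le ht h)⟩

lemma quot_finite {σ : Type*} [Fintype σ] (A : DFA α σ) :
    (leftQuotients A.accepts).Finite := by
  apply Set.Finite.subset (Set.finite_range (fun s : σ => {y | A.evalFrom s y ∈ A.accept}))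
  rintro S ⟨x, rfl⟩
  refine ⟨A.eval x, ?_⟩
  ext y
  exact Iff.of_eq (congrArg (· ∈ A.accept) (A.evalFrom_of_append A.start x y)).symm

end PrefTowerAux

theorem pref_towers_arbitrary_height_infinite {α σA σB : Type*}
    [Fintype σA] [Fintype σB] (A : DFA α σA) (B : DFA α σB)
    (K L : Set (List α)) (hK : K = A.accepts) (hL : L = B.accepts) :
    ((∀ r : ℕ, ∃ w : ℕ → List α, PrefTower K L r w) →
      ∃ w : ℕ → List α, InfPrefTower K L w) ∧
    ((¬ ∃ w : ℕ → List α, InfPrefTower K L w) →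
      ∀ (r : ℕ) (w : ℕ → List α), PrefTower K L r w →
        r ≤ (leftQuotients K).ncard * (leftQuotients L).ncard) := by
  classical
  have hKfin : (leftQuotients K).Finite := hK ▸ PrefTowerAux.quot_finite A
  have hLfin : (leftQuotients L).Finite := hL ▸ PrefTowerAux.quot_finite B
  set N := (leftQuotients K).ncard * (leftQuotients L).ncard with hN
  have main : ∀ w : ℕ → List α, PrefTower K L (N + 1) w →
      ∃ v : ℕ → List α, InfPrefTower K L v := by
    intro w hw
    haveI : Finite ↥(leftQuotients K) := hKfin
    haveI : Finite ↥(leftQuotients L) := hLfin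
    haveI : Fintype ↥(leftQuotients K) := Fintype.ofFinite _
    haveI : Fintype ↥(leftQuotients L) := Fintype.ofFinite _
    set f : Fin (N + 1) → ↥(leftQuotients K) × ↥(leftQuotients L) :=
      fun t => (⟨{y | w ↑t ++ y ∈ K}, ⟨w ↑t, rfl⟩⟩, ⟨{y | w ↑t ++ y ∈ L}, ⟨w ↑t, rfl⟩⟩)
      with hf
    have hcard : Fintype.card (↥(leftQuotients K) × ↥(leftQuotients L)) <
        Fintype.card (Fin (N + 1)) := by
      rw [Fintype.card_prod, Fintype.card_fin,
        ← Nat.card_eq_fintype_card, ← Nat.card_eq_fintype_card,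
        Nat.card_coe_set_eq, Nat.card_coe_set_eq, ← hN]
      omega
    obtain ⟨a, b, hab, hfab⟩ := Fintype.exists_ne_map_eq_of_card_lt f hcard
    have key : ∀ a b : Fin (N + 1), a < b → f a = f b →
        ∃ v : ℕ → List α, InfPrefTower K L v := by
      intro a b hlt hfeq
      have h1 : ({y | w ↑a ++ y ∈ K} : Set (List α)) = {y | w ↑b ++ y ∈ K} := by
        have := congrArg (fun z => (z.1 : Set (List α))) hfeq
        simpa [hf] using this
      have h2 : ({y | w ↑a ++ y ∈ L} : Set (List α)) = {y | w ↑b ++ y ∈ L} := by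
        have := congrArg (fun z => (z.2 : Set (List α))) hfeq
        simpa [hf] using this
      refine PrefTowerAux.exists_inf hw (show (a : ℕ) < (b : ℕ) from hlt) b.isLt ?_ ?_
      · intro s; exact Set.ext_iff.mp h1 s
      · intro s; exact Set.ext_iff.mp h2 s
    rcases lt_or_gt_of_ne hab with h | h
    · exact key a b h hfab
    · exact key b a h hfab.symm
  constructor
  · intro h
    obtain ⟨w, hw⟩ := h (N + 1)
    exact main w hw
  · intro hno r w hw
    by_contra hr
    push_neg at hr
    exact hno (main w (PrefTowerAux.tower_mono (by omega) hw))
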